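/- Suppose h and f are holomorphic near 0, h(0) = f(0) = 0, h'(0) = 1, 0 < |λ| < 1, and h(f(z)) = λh(z) near 0. If h is defined and injective on a neighborhood U of 0 with f(U) ⊂ U, then h extends uniquely to the entire basin of attraction A = {z : fⁿ(z) → 0} of 0 (assuming f is defined on all of A with f(A) ⊂ A) via h(z) = λ^{-n} h(fⁿ(z)) for n large, and the extension satisfies h(f(z)) = λh(z) on all of A. -/

import Mathlib

open Filter Set Function

/-- Extension of the Koenigs linearizing map to the whole basin of attraction
via `h(z) = λ⁻ⁿ h(fⁿ(z))`, and uniqueness of this extension. -/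
theorem stmt19 (f h : ℂ → ℂ) (lam : ℂ)
    (hlam0 : 0 < ‖lam‖) (hlam1 : ‖lam‖ < 1)
    (hh0 : h 0 = 0) (hf0 : f 0 = 0) (hh1 : deriv h 0 = 1)
    (hha : AnalyticAt ℂ h 0) (hfa : AnalyticAt ℂ f 0)
    (U : Set ℂ) (hUopen : IsOpen U) (hU0 : (0 : ℂ) ∈ U)
    (hfU : Set.MapsTo f U U)
    (hhinj : Set.InjOn h U)
    (hlin : ∀ z ∈ U, h (f z) = lam * h z) :
    -- A is the basin of attraction of 0
    (∀ A : Set ℂ, A = {z : ℂ | Filter.Tendsto (fun n => f^[n] z) Filter.atTop (nhds 0)} →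
      Set.MapsTo f A A ∧
      (∃ H : ℂ → ℂ,
        (∀ z ∈ U ∩ A, H z = h z) ∧
        (∀ z ∈ A, H (f z) = lam * H z) ∧
        (∀ z ∈ A, ∀ᶠ n in Filter.atTop, f^[n] z ∈ U ∧ H z = h (f^[n] z) / lam ^ n)) ∧
      (∀ H₁ H₂ : ℂ → ℂ,
        ((∀ z ∈ U ∩ A, H₁ z = h z) ∧ ∀ z ∈ A, H₁ (f z) = lam * H₁ z) →
        ((∀ z ∈ U ∩ A, H₂ z = h z) ∧ ∀ z ∈ A, H₂ (f z) = lam * H₂ z) →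
        ∀ z ∈ A, H₁ z = H₂ z)) := by
  intro A hA
  subst hA
  have hlam : lam ≠ 0 := fun hl => by simp [hl] at hlam0
  -- f maps the basin to itself
  have hAf : Set.MapsTo f {z : ℂ | Filter.Tendsto (fun n => f^[n] z) Filter.atTop (nhds 0)}
      {z : ℂ | Filter.Tendsto (fun n => f^[n] z) Filter.atTop (nhds 0)} := by
    intro z hz
    simp only [mem_setOf_eq] at hz ⊢
    have h1 : Tendsto (fun n => f^[n + 1] z) atTop (nhds 0) :=
      hz.comp (tendsto_add_atTop_nat 1)
    simpa [Function.iterate_succ_apply] using h1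
  -- iterates stay in A
  have hAiter : ∀ z ∈ {z : ℂ | Filter.Tendsto (fun n => f^[n] z) Filter.atTop (nhds 0)},
      ∀ n, f^[n] z ∈ {z : ℂ | Filter.Tendsto (fun n => f^[n] z) Filter.atTop (nhds 0)} := by
    intro z hz n
    induction n with
    | zero => exact hz
    | succ n ih => rw [Function.iterate_succ_apply']; exact hAf ih
  -- once in U, stay in U
  have stab : ∀ z n, f^[n] z ∈ U → ∀ m, n ≤ m → f^[m] z ∈ U := by
    intro z n hn m hm
    induction m, hm using Nat.le_induction with
    | base => exact hn
    | succ m _ ih => rw [Function.iterate_succ_apply']; exact hfU ih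
  -- every basin point eventually enters U
  have hex : ∀ z ∈ {z : ℂ | Filter.Tendsto (fun n => f^[n] z) Filter.atTop (nhds 0)},
      ∃ n, f^[n] z ∈ U := fun z hz => (hz.eventually (hUopen.mem_nhds hU0)).exists
  classical
  set H : ℂ → ℂ := fun z =>
    if hz : ∃ n, f^[n] z ∈ U then h (f^[Nat.find hz] z) / lam ^ Nat.find hz else 0 with hHdef
  -- the value is independent of n
  have key : ∀ z (hz : ∃ n, f^[n] z ∈ U), ∀ m, Nat.find hz ≤ m →
      H z = h (f^[m] z) / lam ^ m := by
    intro z hz m hm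
    simp only [hHdef, dif_pos hz]
    induction m, hm using Nat.le_induction with
    | base => rfl
    | succ m hm ih =>
      rw [ih]
      have hmU : f^[m] z ∈ U := stab z _ (Nat.find_spec hz) m hm
      rw [Function.iterate_succ_apply', hlin _ hmU, pow_succ]
      field_simp
  have hfirst : ∀ z ∈ U ∩ {z : ℂ | Filter.Tendsto (fun n => f^[n] z) Filter.atTop (nhds 0)},
      H z = h z := by
    intro z hz
    have hz0 : ∃ n, f^[n] z ∈ U := ⟨0, hz.1⟩
    have h0 : f^[0] z ∈ U := by simp only [Function.iterate_zero_apply]; exact hz.1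
    have := key z hz0 0 (Nat.find_le h0)
    simpa using this
  refine ⟨hAf, ⟨⟨H, hfirst, ?_, ?_⟩, ?_⟩⟩
  · -- functional equation
    intro z hz
    obtain ⟨n, hn⟩ := hex z hz
    have hz' : ∃ n, f^[n] (f z) ∈ U := by
      refine ⟨n, ?_⟩
      rw [← Function.iterate_succ_apply]
      exact stab z n hn (n + 1) (Nat.le_succ n)
    have hzU : ∃ n, f^[n] z ∈ U := ⟨n, hn⟩
    set m := max (Nat.find hz') (Nat.find hzU) with hmdef
    have h1 : H (f z) = h (f^[m] (f z)) / lam ^ m :=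
      key (f z) hz' m (le_max_left _ _)
    have h2 : H z = h (f^[m + 1] z) / lam ^ (m + 1) :=
      key z hzU (m + 1) (le_trans (le_max_right _ _) (Nat.le_succ m))
    rw [h1, h2, ← Function.iterate_succ_apply, pow_succ]
    field_simp
  · -- eventual formula
    intro z hz
    obtain ⟨n, hn⟩ := hex z hz
    have hzU : ∃ n, f^[n] z ∈ U := ⟨n, hn⟩
    refine Filter.eventually_atTop.2 ⟨Nat.find hzU, fun m hm => ?_⟩
    exact ⟨stab z _ (Nat.find_spec hzU) m hm, key z hzU m hm⟩
  · -- uniqueness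
    intro H₁ H₂ ⟨h1U, h1f⟩ ⟨h2U, h2f⟩ z hz
    obtain ⟨n, hn⟩ := hex z hz
    have hiter : ∀ G : ℂ → ℂ, (∀ w ∈ {z : ℂ | Filter.Tendsto (fun n => f^[n] z) Filter.atTop (nhds 0)},
        G (f w) = lam * G w) → ∀ k, G (f^[k] z) = lam ^ k * G z := by
      intro G hG k
      induction k with
      | zero => simp
      | succ k ih =>
        rw [Function.iterate_succ_apply', hG _ (hAiter z hz k), ih, pow_succ]
        ring
    have hnA := hAiter z hz n
    have e1 : H₁ (f^[n] z) = h (f^[n] z) := h1U _ ⟨hn, hnA⟩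
    have e2 : H₂ (f^[n] z) = h (f^[n] z) := h2U _ ⟨hn, hnA⟩
    have := (hiter H₁ h1f n).symm.trans (e1.trans (e2.symm.trans (hiter H₂ h2f n)))
    exact mul_left_cancel₀ (pow_ne_zero n hlam) this
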